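/- Let F be a field of characteristic 2, m ≥ 1, and let A ∈ F^{m×m} be upper unitriangular (A[j,j] = 1 for all j and A[k,j] = 0 for k > j) and b ∈ F^m. Let n ≥ 1 and let A^{(1)}, …, A^{(n)} and b^{(1)}, …, b^{(n)} be additive sharings, i.e. ∑_i A^{(i)} = A and ∑_i b^{(i)} = b. Run the masked back substitution: for j = m down to 2, set x_j := ∑_{i=1}^n b^{(i)}_j (unmasking the j-th entry), then for every k < j and every share index i update b^{(i)}_k := b^{(i)}_k + x_j · A^{(i)}[k,j]; finally set x_1 := ∑_{i=1}^n b^{(i)}_1. Then the resulting public vector x = (x_1, …, x_m) satisfies A·x = b, and hence equals the unique solution of the system. (Functional correctness of the SecBackSub gadget with public output.) -/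

import Mathlib

def sbFold {F : Type*} [Field F] {n m : ℕ}
    (AS : Fin n → Matrix (Fin m) (Fin m) F)
    (bS : Fin n → Fin m → F) :
    (Fin n → Fin m → F) × (Fin m → F) :=
  ((((List.finRange m).filter (fun (j : Fin m) => 0 < (j : ℕ))).reverse).foldl
    (fun st j =>
      let xj := ∑ i, st.1 i j
      (fun i k => if k < j then st.1 i k + xj * AS i k j else st.1 i k,
       Function.update st.2 j xj))
    (bS, fun _ => 0))

section aux

variable {F : Type*} [Field F] {n m : ℕ}

/-- Unshared step. -/
def fstep (A : Matrix (Fin m) (Fin m) F) (B : Fin m → F) (j : Fin m) : Fin m → F :=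
  fun k => if k < j then B k + B j * A k j else B k

/-- Shared step. -/
def sstep (AS : Fin n → Matrix (Fin m) (Fin m) F)
    (st : (Fin n → Fin m → F) × (Fin m → F)) (j : Fin m) :
    (Fin n → Fin m → F) × (Fin m → F) :=
  (fun i k => if k < j then st.1 i k + (∑ i', st.1 i' j) * AS i k j else st.1 i k,
   Function.update st.2 j (∑ i', st.1 i' j))

lemma sbFold_eq (AS : Fin n → Matrix (Fin m) (Fin m) F) (bS : Fin n → Fin m → F) :
    sbFold AS bS =
      ((((List.finRange m).filter (fun (j : Fin m) => 0 < (j : ℕ))).reverse).foldl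
        (sstep AS) (bS, fun _ => 0)) := rfl

lemma fstep_fix (A : Matrix (Fin m) (Fin m) F) :
    ∀ (L : List (Fin m)) (B : Fin m → F) (k : Fin m),
    (∀ l ∈ L, ¬ k < l) → L.foldl (fstep A) B k = B k
  | [], _, _, _ => rfl
  | j :: L, B, k, h => by
    rw [List.foldl_cons, fstep_fix A L _ k (fun l hl => h l (List.mem_cons_of_mem _ hl))]
    simp [fstep, h j (List.mem_cons_self (a := j) (l := L))]

lemma fold_eq (A : Matrix (Fin m) (Fin m) F) :
    ∀ (L : List (Fin m)), L.Pairwise (· > ·) → ∀ (B : Fin m → F) (k : Fin m),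
    L.foldl (fstep A) B k =
      B k + ∑ l ∈ Finset.univ.filter (fun l => k < l ∧ l ∈ L),
        (L.foldl (fstep A) B l) * A k l
  | [], _, B, k => by simp
  | j :: L, hp, B, k => by
    rw [List.pairwise_cons] at hp
    obtain ⟨hj, hL⟩ := hp
    have hjL : j ∉ L := fun h => lt_irrefl j (hj j h)
    have hGj : L.foldl (fstep A) (fstep A B j) j = B j := by
      rw [fstep_fix A L _ j (fun l hl => asymm (hj l hl))]
      simp [fstep]
    rw [List.foldl_cons, fold_eq A L hL (fstep A B j) k]
    by_cases hk : k < j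
    · have hset : Finset.univ.filter (fun l => k < l ∧ l ∈ j :: L)
          = insert j (Finset.univ.filter (fun l => k < l ∧ l ∈ L)) := by
        ext l
        simp only [Finset.mem_filter, Finset.mem_univ, true_and, Finset.mem_insert,
          List.mem_cons]
        constructor
        · rintro ⟨h1, h2 | h2⟩
          · exact Or.inl h2
          · exact Or.inr ⟨h1, h2⟩
        · rintro (rfl | ⟨h1, h2⟩)
          · exact ⟨hk, Or.inl rfl⟩
          · exact ⟨h1, Or.inr h2⟩
      rw [hset, Finset.sum_insert (by simp [hjL]), hGj]
      have hb' : fstep A B j k = B k + B j * A k j := by simp [fstep, hk]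
      rw [hb']
      ring
    · have hset : Finset.univ.filter (fun l => k < l ∧ l ∈ j :: L)
          = Finset.univ.filter (fun l => k < l ∧ l ∈ L) := by
        ext l
        simp only [Finset.mem_filter, Finset.mem_univ, true_and, List.mem_cons]
        constructor
        · rintro ⟨h1, rfl | h2⟩
          · exact absurd h1 hk
          · exact ⟨h1, h2⟩
        · rintro ⟨h1, h2⟩
          exact ⟨h1, Or.inr h2⟩
      rw [hset]
      have hb' : fstep A B j k = B k := by simp [fstep, hk]
      rw [hb']

variable (A : Matrix (Fin m) (Fin m) F) (AS : Fin n → Matrix (Fin m) (Fin m) F)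
  (hA : ∑ i, AS i = A)

include hA

lemma sum_sstep (st : (Fin n → Fin m → F) × (Fin m → F)) (j : Fin m) :
    (fun k => ∑ i, (sstep AS st j).1 i k) = fstep A (fun k => ∑ i, st.1 i k) j := by
  funext k
  have hAkj : ∑ i, AS i k j = A k j := by
    rw [← hA, Matrix.sum_apply]
  show (∑ i, if k < j then st.1 i k + (∑ i', st.1 i' j) * AS i k j else st.1 i k)
      = if k < j then (∑ i, st.1 i k) + (∑ i, st.1 i j) * A k j else ∑ i, st.1 i k
  by_cases h : k < j
  · simp only [if_pos h, Finset.sum_add_distrib, ← Finset.mul_sum, hAkj]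
  · simp only [if_neg h]

lemma shares_sum : ∀ (L : List (Fin m)) (st : (Fin n → Fin m → F) × (Fin m → F)),
    (fun k => ∑ i, (L.foldl (sstep AS) st).1 i k)
      = L.foldl (fstep A) (fun k => ∑ i, st.1 i k)
  | [], st => rfl
  | j :: L, st => by
    rw [List.foldl_cons, List.foldl_cons, shares_sum L (sstep AS st j),
      sum_sstep A AS hA st j]

lemma shares_sum' (L : List (Fin m)) (s : Fin n → Fin m → F) (r : Fin m → F) :
    (fun k => ∑ i, (L.foldl (sstep AS) (s, r)).1 i k)
      = L.foldl (fstep A) (fun k => ∑ i, s i k) :=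
  shares_sum A AS hA L (s, r)

omit hA

lemma record_not_mem : ∀ (L : List (Fin m)) (st : (Fin n → Fin m → F) × (Fin m → F))
    (j : Fin m), j ∉ L → (L.foldl (sstep AS) st).2 j = st.2 j
  | [], _, _, _ => rfl
  | j' :: L, st, j, h => by
    have h1 : j ≠ j' := fun he => h (he ▸ List.mem_cons_self (a := j') (l := L))
    have h2 : j ∉ L := fun he => h (List.mem_cons_of_mem _ he)
    rw [List.foldl_cons, record_not_mem L _ j h2]
    simp [sstep, Function.update_of_ne h1]

include hA

lemma record_mem : ∀ (L : List (Fin m)), L.Pairwise (· > ·) →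
    ∀ (st : (Fin n → Fin m → F) × (Fin m → F)) (j : Fin m), j ∈ L →
    (L.foldl (sstep AS) st).2 j = L.foldl (fstep A) (fun k => ∑ i, st.1 i k) j
  | [], _, _, _, h => absurd h List.not_mem_nil
  | j' :: L, hp, st, j, h => by
    rw [List.pairwise_cons] at hp
    obtain ⟨hj', hL⟩ := hp
    rw [List.foldl_cons, List.foldl_cons, ← sum_sstep A AS hA st j']
    by_cases hmem : j ∈ L
    · exact record_mem L hL (sstep AS st j') j hmem
    · have hjj' : j = j' := by
        rcases List.mem_cons.mp h with h | h
        · exact h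
        · exact absurd h hmem
      subst hjj'
      rw [record_not_mem AS L _ j hmem,
        fstep_fix A L _ j (fun l hl => asymm (hj' l hl))]
      simp [sstep]

lemma record_mem' (L : List (Fin m)) (hp : L.Pairwise (· > ·))
    (s : Fin n → Fin m → F) (r : Fin m → F) (j : Fin m) (hj : j ∈ L) :
    (L.foldl (sstep AS) (s, r)).2 j = L.foldl (fstep A) (fun k => ∑ i, s i k) j :=
  record_mem A AS hA L hp (s, r) j hj

end aux

theorem stmt_15 (F : Type*) [Field F] [CharP F 2] (m : ℕ) (hm : 1 ≤ m)
    (A : Matrix (Fin m) (Fin m) F)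
    (hdiag : ∀ j, A j j = 1) (hlow : ∀ k j : Fin m, j < k → A k j = 0)
    (b : Fin m → F) (n : ℕ) (hn : 1 ≤ n)
    (AS : Fin n → Matrix (Fin m) (Fin m) F) (bS : Fin n → Fin m → F)
    (hA : ∑ i, AS i = A) (hb : ∑ i, bS i = b)
    (x : Fin m → F)
    (hx : x = Function.update (sbFold AS bS).2 ⟨0, hm⟩
        (∑ i, (sbFold AS bS).1 i ⟨0, hm⟩)) :
    A.mulVec x = b ∧ ∀ y : Fin m → F, A.mulVec y = b → y = x := by
  have hLp : (((List.finRange m).filter (fun (j : Fin m) => 0 < (j : ℕ))).reverse).Pairwise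
      (· > ·) := by
    rw [List.pairwise_reverse]
    exact (List.pairwise_lt_finRange m).filter _
  set L : List (Fin m) := ((List.finRange m).filter (fun (j : Fin m) => 0 < (j : ℕ))).reverse
    with hLdef
  have hLmem : ∀ j : Fin m, j ∈ L ↔ 0 < (j : ℕ) := by
    intro j
    simp [hLdef, List.mem_filter, List.mem_finRange]
  have hbsum : (fun k => ∑ i, bS i k) = b := by
    funext k; rw [← hb]; simp [Finset.sum_apply]
  set G : Fin m → F := L.foldl (fstep A) b with hGdef
  -- x = G
  have hxG : x = G := by
    funext j
    rw [hx]
    by_cases hj : j = ⟨0, hm⟩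
    · subst hj
      rw [Function.update_self, sbFold_eq]
      have h1 := congrFun (shares_sum' A AS hA L bS (fun _ => 0)) ⟨0, hm⟩
      rw [hbsum] at h1
      exact h1
    · rw [Function.update_of_ne hj, sbFold_eq]
      have hjL : j ∈ L := by
        rw [hLmem]
        rcases Nat.eq_zero_or_pos (j : ℕ) with h | h
        · exact absurd (Fin.ext h) hj
        · exact h
      rw [record_mem' A AS hA L hLp bS (fun _ => 0) j hjL, hbsum]
  -- key recursion for G
  have hGrec : ∀ k : Fin m,
      G k = b k + ∑ l ∈ Finset.univ.filter (fun l => k < l), G l * A k l := by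
    intro k
    have h1 := fold_eq A L hLp b k
    have hset : Finset.univ.filter (fun l => k < l ∧ l ∈ L)
        = Finset.univ.filter (fun l : Fin m => k < l) := by
      ext l
      simp only [Finset.mem_filter, Finset.mem_univ, true_and, hLmem]
      exact ⟨fun h => h.1, fun h => ⟨h, Nat.lt_of_le_of_lt (Nat.zero_le _) h⟩⟩
    rw [hset] at h1
    exact h1
  have hAx : A.mulVec x = b := by
    funext k
    rw [hxG]
    show ∑ l, A k l * G l = b k
    rw [← Finset.sum_filter_add_sum_filter_not Finset.univ (fun l => k < l)]
    have h2 : ∑ l ∈ Finset.univ.filter (fun l => ¬ k < l), A k l * G l = G k := by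
      rw [Finset.sum_eq_single_of_mem k (by simp)]
      · rw [hdiag, one_mul]
      · intro l hl hne
        rw [Finset.mem_filter] at hl
        have hlk : l < k := lt_of_le_of_ne (not_lt.mp hl.2) hne
        rw [hlow k l hlk, zero_mul]
    rw [h2, hGrec k]
    have hcomm : ∑ l ∈ Finset.univ.filter (fun l => k < l), A k l * G l
        = ∑ l ∈ Finset.univ.filter (fun l => k < l), G l * A k l :=
      Finset.sum_congr rfl (fun l _ => mul_comm _ _)
    rw [hcomm, add_comm, add_assoc, CharTwo.add_self_eq_zero, add_zero]
  refine ⟨hAx, fun y hy => ?_⟩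
  have hbt : A.BlockTriangular id := fun i j h => hlow i j h
  have hdet : IsUnit A.det := by
    rw [Matrix.det_of_upperTriangular hbt]
    simp [hdiag]
  haveI := A.invertibleOfIsUnitDet hdet
  exact A.mulVec_injective_of_invertible (hy.trans hAx.symm)
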